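/- Let κ > 1 and define λ_{k+1} = (1 - λ_k²/κ + √((1 - λ_k²/κ)² + 4λ_k²))/2 with λ_1 ∈ (1, √κ]. Then λ_k converges to √κ as k → ∞. -/
import Mathlib

theorem lambda_tendsto_sqrt_kappa (κ : ℝ) (hκ : 1 < κ) (lam : ℕ → ℝ)
    (hinit : 1 < lam 1 ∧ lam 1 ≤ Real.sqrt κ)
    (hrec : ∀ k ≥ 1, lam (k + 1) =
      (1 - (lam k) ^ 2 / κ + Real.sqrt ((1 - (lam k) ^ 2 / κ) ^ 2 + 4 * (lam k) ^ 2)) / 2) :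
    Filter.Tendsto lam Filter.atTop (nhds (Real.sqrt κ)) := by
  obtain ⟨h1, h2⟩ := hinit
  have hκ0 : (0:ℝ) < κ := by linarith
  set s := Real.sqrt κ with hs
  have hs2 : s ^ 2 = κ := Real.sq_sqrt hκ0.le
  have hs0 : 0 ≤ s := Real.sqrt_nonneg κ
  have hs1 : 1 < s := by nlinarith
  set f : ℝ → ℝ := fun x =>
    (1 - x ^ 2 / κ + Real.sqrt ((1 - x ^ 2 / κ) ^ 2 + 4 * x ^ 2)) / 2 with hf
  have hfcont : Continuous f := by
    apply Continuous.div_const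
    exact (continuous_const.sub ((continuous_pow 2).div_const κ)).add
      (((continuous_const.sub ((continuous_pow 2).div_const κ)).pow 2).add
        (continuous_const.mul (continuous_pow 2))).sqrt
  -- key stepping lemma
  have key : ∀ x : ℝ, 1 < x → x ≤ s → x ≤ f x ∧ f x ≤ s := by
    intro x hx1 hxs
    set d := 1 - x ^ 2 / κ with hd
    set r := Real.sqrt (d ^ 2 + 4 * x ^ 2) with hr
    have hfx : f x = (d + r) / 2 := rfl
    clear_value d
    have hx2 : x ^ 2 ≤ κ := by nlinarith
    have hd0 : 0 ≤ d := by
      have : x ^ 2 / κ ≤ 1 := (div_le_one hκ0).2 hx2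
      rw [hd]; linarith
    have hdκ : d * κ = κ - x ^ 2 := by rw [hd]; field_simp
    have hr0 : 0 ≤ (d ^ 2 + 4 * x ^ 2) := by positivity
    have hr2 : r ^ 2 = d ^ 2 + 4 * x ^ 2 := by rw [hr]; exact Real.sq_sqrt hr0
    have hrnn : 0 ≤ r := by rw [hr]; exact Real.sqrt_nonneg _
    clear_value r
    rw [hfx]
    constructor
    · -- x ≤ (d + r)/2, i.e. 2x - d ≤ r
      have h1' : (2 * x - d) ^ 2 ≤ d ^ 2 + 4 * x ^ 2 := by nlinarith
      have h2' : 2 * x - d ≤ r := by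
        have := Real.sqrt_le_sqrt h1'
        rw [Real.sqrt_sq_eq_abs] at this
        rw [hr]
        exact le_trans (le_abs_self _) this
      linarith
    · -- (d + r)/2 ≤ s, i.e. r ≤ 2s - d
      have hsd : 0 ≤ 2 * s - d := by
        have hx2k : 0 ≤ x ^ 2 / κ := by positivity
        have : d ≤ 1 := by rw [hd]; linarith
        linarith
      have hsk : s * κ = s * s * s := by nlinarith
      have hint1 : 0 ≤ s * (s - 1) * (s ^ 2 - x ^ 2) := by
        apply mul_nonneg (mul_nonneg hs0 (by linarith))
        nlinarith
      have key2 : x ^ 2 + s * d ≤ s ^ 2 := by nlinarith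
      have h1' : d ^ 2 + 4 * x ^ 2 ≤ (2 * s - d) ^ 2 := by nlinarith
      have h2' : r ≤ 2 * s - d := by
        have := Real.sqrt_le_sqrt h1'
        rw [Real.sqrt_sq hsd] at this
        rw [hr]; exact this
      linarith
  -- shifted sequence
  set m : ℕ → ℝ := fun k => lam (k + 1) with hm
  have hmrec : ∀ k, m (k + 1) = f (m k) := by
    intro k; simp only [hm, hf]; exact hrec (k + 1) (by omega)
  have hinv : ∀ k, 1 < m k ∧ m k ≤ s := by
    intro k
    induction k with
    | zero => exact ⟨h1, h2⟩
    | succ n ih =>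
      obtain ⟨ih1, ih2⟩ := ih
      obtain ⟨hle, hub⟩ := key (m n) ih1 ih2
      rw [hmrec n]
      exact ⟨lt_of_lt_of_le ih1 hle, hub⟩
  have hmono : Monotone m := by
    apply monotone_nat_of_le_succ
    intro k
    rw [hmrec k]
    exact (key (m k) (hinv k).1 (hinv k).2).1
  have hbdd : BddAbove (Set.range m) := ⟨s, by rintro _ ⟨k, rfl⟩; exact (hinv k).2⟩
  set L := ⨆ k, m k with hL
  have hlim : Filter.Tendsto m Filter.atTop (nhds L) := tendsto_atTop_ciSup hmono hbdd
  have hL1 : 1 < L := lt_of_lt_of_le (hinv 0).1 (le_ciSup hbdd 0)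
  have hLs : L ≤ s := ciSup_le fun k => (hinv k).2
  clear_value L
  -- fixed point equation
  have hfix : f L = L := by
    have h1' : Filter.Tendsto (fun k => m (k + 1)) Filter.atTop (nhds L) :=
      (Filter.tendsto_add_atTop_iff_nat 1).2 hlim
    have h2' : Filter.Tendsto (fun k => f (m k)) Filter.atTop (nhds (f L)) :=
      (hfcont.continuousAt).tendsto.comp hlim
    have : (fun k => m (k + 1)) = fun k => f (m k) := funext hmrec
    rw [this] at h1'
    exact tendsto_nhds_unique h2' h1'
  -- L = s
  have hLeq : L = s := by
    have hL0 : 0 < L := by linarith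
    set d := 1 - L ^ 2 / κ with hd
    set r := Real.sqrt (d ^ 2 + 4 * L ^ 2) with hr
    have hfL : f L = (d + r) / 2 := rfl
    clear_value d
    have hr0 : 0 ≤ (d ^ 2 + 4 * L ^ 2) := by positivity
    have hr2 : r ^ 2 = d ^ 2 + 4 * L ^ 2 := by rw [hr]; exact Real.sq_sqrt hr0
    clear_value r
    have hrv : r = 2 * L - d := by
      rw [hfL] at hfix
      linarith
    have hd0 : d = 0 := by
      have heq : (2 * L - d) ^ 2 = d ^ 2 + 4 * L ^ 2 := by rw [← hrv]; exact hr2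
      have hLd : L * d = 0 := by linear_combination (-1/4 : ℝ) * heq
      rcases mul_eq_zero.1 hLd with h | h
      · exact absurd h hL0.ne'
      · exact h
    have hL2 : L ^ 2 = κ := by
      rw [hd] at hd0
      have : L ^ 2 / κ = 1 := by linarith
      field_simp at this
      linarith
    have hfact : (L - s) * (L + s) = 0 := by linear_combination hL2 - hs2
    rcases mul_eq_zero.1 hfact with h | h
    · linarith
    · linarith
  rw [hLeq] at hlim
  exact (Filter.tendsto_add_atTop_iff_nat 1).1 hlim
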